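/- Fix a probability distribution Q_Y on 𝒴 whose support contains the support of P_Y. The function f(θ) := θ·H_{1+θ}(P_XY|Q_Y) = −log Σ_{x,y} P_XY(x,y)^{1+θ} Q_Y(y)^{−θ}, extended by f(0)=0, is concave on (−1,∞); moreover f is strictly concave on (−1,∞) if and only if the variance of the random variable log(Q_Y(Y)/P_XY(X,Y)) under (X,Y)∼P_XY is strictly positive. -/

import Mathlib

open Real Filter

/-- Marginal distribution on `𝒴`. -/
noncomputable def margY {𝒳 𝒴 : Type*} [Fintype 𝒳] (P : 𝒳 × 𝒴 → ℝ) (y : 𝒴) : ℝ :=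
  ∑ x : 𝒳, P (x, y)

/-- `θ · H_{1+θ}(P_{XY}|Q_Y) = - log Σ P(x,y)^{1+θ} Q(y)^{-θ}` (which equals `0` at `θ = 0`). -/
noncomputable def thetaCondRenyiQ {𝒳 𝒴 : Type*} [Fintype 𝒳] [Fintype 𝒴]
    (P : 𝒳 × 𝒴 → ℝ) (Q : 𝒴 → ℝ) (θ : ℝ) : ℝ :=
  -Real.log (∑ x : 𝒳, ∑ y : 𝒴,
    if 0 < P (x, y) then P (x, y) ^ (1 + θ) * Q y ^ (-θ) else 0)

/-- Variance of `log (Q(Y)/P(X,Y))` under `P`. -/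
noncomputable def varLogQ {𝒳 𝒴 : Type*} [Fintype 𝒳] [Fintype 𝒴]
    (P : 𝒳 × 𝒴 → ℝ) (Q : 𝒴 → ℝ) : ℝ :=
  (∑ x : 𝒳, ∑ y : 𝒴,
    if 0 < P (x, y) then P (x, y) * (Real.log (Q y / P (x, y))) ^ 2 else 0)
  - (∑ x : 𝒳, ∑ y : 𝒴,
    if 0 < P (x, y) then P (x, y) * Real.log (Q y / P (x, y)) else 0) ^ 2

section Aux

variable {ι : Type*} (s : Finset ι) (w a : ι → ℝ)

/-- Moment generating function `∑ w i * exp (θ * a i)`. -/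
noncomputable def gF (θ : ℝ) : ℝ := ∑ p ∈ s, w p * Real.exp (θ * a p)

noncomputable def gF' (θ : ℝ) : ℝ := ∑ p ∈ s, (w p * a p) * Real.exp (θ * a p)

noncomputable def gF'' (θ : ℝ) : ℝ := ∑ p ∈ s, (w p * a p ^ 2) * Real.exp (θ * a p)

lemma hasDerivAt_gF (θ : ℝ) : HasDerivAt (gF s w a) (gF' s w a θ) θ := by
  unfold gF gF'
  apply HasDerivAt.fun_sum
  intro p _
  have h1 : HasDerivAt (fun t : ℝ => t * a p) (a p) θ := by
    simpa using (hasDerivAt_id θ).mul_const (a p)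
  have h2 := (h1.exp).const_mul (w p)
  convert h2 using 1
  case e'_9 => ring
  case e'_4 => rfl

lemma hasDerivAt_gF' (θ : ℝ) : HasDerivAt (gF' s w a) (gF'' s w a θ) θ := by
  unfold gF' gF''
  apply HasDerivAt.fun_sum
  intro p _
  have h1 : HasDerivAt (fun t : ℝ => t * a p) (a p) θ := by
    simpa using (hasDerivAt_id θ).mul_const (a p)
  have h2 := (h1.exp).const_mul (w p * a p)
  convert h2 using 1
  case e'_9 => ring
  case e'_4 => rfl

lemma gF_pos (hw : ∀ p ∈ s, 0 < w p) (hs : s.Nonempty) (θ : ℝ) : 0 < gF s w a θ :=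
  Finset.sum_pos (fun p hp => mul_pos (hw p hp) (Real.exp_pos _)) hs

lemma gF_key (hw : ∀ p ∈ s, 0 < w p) (hs : s.Nonempty) (θ : ℝ) :
    gF'' s w a θ * gF s w a θ - gF' s w a θ ^ 2
      = (∑ p ∈ s, (w p * Real.exp (θ * a p)) *
          (a p - gF' s w a θ / gF s w a θ) ^ 2) * gF s w a θ := by
  have hG : gF s w a θ ≠ 0 := (gF_pos s w a hw hs θ).ne'
  set m : ℝ := gF' s w a θ / gF s w a θ with hm
  have hexp : ∀ p ∈ s, (w p * Real.exp (θ * a p)) * (a p - m) ^ 2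
      = (w p * a p ^ 2) * Real.exp (θ * a p)
        - 2 * m * ((w p * a p) * Real.exp (θ * a p))
        + m ^ 2 * (w p * Real.exp (θ * a p)) := fun p _ => by ring
  have hsum : ∑ p ∈ s, (w p * Real.exp (θ * a p)) * (a p - m) ^ 2
      = gF'' s w a θ - 2 * m * gF' s w a θ + m ^ 2 * gF s w a θ := by
    unfold gF gF' gF''
    rw [Finset.sum_congr rfl hexp, Finset.sum_add_distrib, Finset.sum_sub_distrib,
      ← Finset.mul_sum, ← Finset.mul_sum]
  rw [hsum, hm]
  field_simp
  ring

lemma gF_cs_nonneg (hw : ∀ p ∈ s, 0 < w p) (hs : s.Nonempty) (θ : ℝ) :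
    0 ≤ gF'' s w a θ * gF s w a θ - gF' s w a θ ^ 2 := by
  rw [gF_key s w a hw hs θ]
  apply mul_nonneg _ (gF_pos s w a hw hs θ).le
  apply Finset.sum_nonneg
  intro p hp
  exact mul_nonneg (mul_nonneg (hw p hp).le (Real.exp_pos _).le) (sq_nonneg _)

lemma gF_cs_pos (hw : ∀ p ∈ s, 0 < w p) (hs : s.Nonempty)
    (hne : ∃ p ∈ s, ∃ q ∈ s, a p ≠ a q) (θ : ℝ) :
    0 < gF'' s w a θ * gF s w a θ - gF' s w a θ ^ 2 := by
  rw [gF_key s w a hw hs θ]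
  apply mul_pos _ (gF_pos s w a hw hs θ)
  obtain ⟨p, hp, q, hq, hpq⟩ := hne
  set m : ℝ := gF' s w a θ / gF s w a θ
  have hr : ∃ r ∈ s, a r ≠ m := by
    by_contra h
    push_neg at h
    exact hpq ((h p hp).trans (h q hq).symm)
  obtain ⟨r, hr, hrm⟩ := hr
  apply Finset.sum_pos'
  · intro i hi
    exact mul_nonneg (mul_nonneg (hw i hi).le (Real.exp_pos _).le) (sq_nonneg _)
  · refine ⟨r, hr, ?_⟩
    have hne0 : a r - m ≠ 0 := sub_ne_zero.mpr hrm
    have hwr := hw r hr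
    have he := Real.exp_pos (θ * a r)
    positivity

lemma deriv_neg_log_gF (hw : ∀ p ∈ s, 0 < w p) (hs : s.Nonempty) :
    deriv (fun θ => -Real.log (gF s w a θ)) =
      fun θ => -(gF' s w a θ / gF s w a θ) := by
  funext θ
  exact (((hasDerivAt_gF s w a θ).log (gF_pos s w a hw hs θ).ne').neg).deriv

lemma deriv2_neg_log_gF (hw : ∀ p ∈ s, 0 < w p) (hs : s.Nonempty) (θ : ℝ) :
    deriv^[2] (fun θ => -Real.log (gF s w a θ)) θ
      = -((gF'' s w a θ * gF s w a θ - gF' s w a θ * gF' s w a θ) / gF s w a θ ^ 2) := by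
  have h2 : HasDerivAt (fun θ => -(gF' s w a θ / gF s w a θ))
      (-((gF'' s w a θ * gF s w a θ - gF' s w a θ * gF' s w a θ) / gF s w a θ ^ 2)) θ :=
    (((hasDerivAt_gF' s w a θ).div (hasDerivAt_gF s w a θ)
      (gF_pos s w a hw hs θ).ne')).neg
  show deriv (deriv (fun θ => -Real.log (gF s w a θ))) θ = _
  rw [deriv_neg_log_gF s w a hw hs]
  exact h2.deriv

lemma continuous_neg_log_gF (hw : ∀ p ∈ s, 0 < w p) (hs : s.Nonempty) :
    Continuous (fun θ => -Real.log (gF s w a θ)) := by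
  have hd : Differentiable ℝ (fun θ => -Real.log (gF s w a θ)) := fun θ =>
    (((hasDerivAt_gF s w a θ).log (gF_pos s w a hw hs θ).ne').neg).differentiableAt
  exact hd.continuous

end Aux

theorem thetaCondRenyiQ_concave_iff {𝒳 𝒴 : Type*} [Fintype 𝒳] [Fintype 𝒴]
    (P : 𝒳 × 𝒴 → ℝ) (hP0 : ∀ p, 0 ≤ P p) (hP1 : ∑ p : 𝒳 × 𝒴, P p = 1)
    (Q : 𝒴 → ℝ) (hQ0 : ∀ y, 0 ≤ Q y) (hQ1 : ∑ y : 𝒴, Q y = 1)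
    (hQsupp : ∀ y, 0 < margY P y → 0 < Q y) :
    ConcaveOn ℝ (Set.Ioi (-1 : ℝ)) (fun θ => thetaCondRenyiQ P Q θ)
    ∧ (StrictConcaveOn ℝ (Set.Ioi (-1 : ℝ)) (fun θ => thetaCondRenyiQ P Q θ)
        ↔ 0 < varLogQ P Q) := by
  classical
  set s : Finset (𝒳 × 𝒴) := Finset.univ.filter (fun p => 0 < P p) with hsdef
  set a : 𝒳 × 𝒴 → ℝ := fun p => Real.log (P p / Q p.2) with hadef
  have hmem : ∀ p : 𝒳 × 𝒴, p ∈ s ↔ 0 < P p := by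
    intro p; simp [hsdef]
  have hwpos : ∀ p ∈ s, 0 < P p := fun p hp => (hmem p).mp hp
  have hQpos : ∀ p ∈ s, 0 < Q p.2 := by
    intro p hp
    apply hQsupp
    unfold margY
    have : P (p.1, p.2) ≤ ∑ x : 𝒳, P (x, p.2) :=
      Finset.single_le_sum (f := fun x => P (x, p.2)) (fun i _ => hP0 (i, p.2))
        (Finset.mem_univ p.1)
    exact lt_of_lt_of_le ((hmem p).mp hp) (by simpa using this)
  have hw1 : ∑ p ∈ s, P p = 1 := by
    rw [hsdef, Finset.sum_filter]
    rw [← hP1]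
    apply Finset.sum_congr rfl
    intro p _
    by_cases h : 0 < P p
    · simp [h]
    · simp [h, le_antisymm (not_lt.mp h) (hP0 p)]
  have hs : s.Nonempty := by
    by_contra h
    rw [Finset.not_nonempty_iff_eq_empty] at h
    rw [h] at hw1
    simp at hw1
  -- rewrite the objective function
  have hfun : (fun θ => thetaCondRenyiQ P Q θ) = fun θ => -Real.log (gF s P a θ) := by
    funext θ
    unfold thetaCondRenyiQ gF
    congr 1
    have e1 : (∑ x : 𝒳, ∑ y : 𝒴, if 0 < P (x, y) then P (x, y) ^ (1 + θ) * Q y ^ (-θ) else 0)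
        = ∑ p ∈ s, P p ^ (1 + θ) * Q p.2 ^ (-θ) := by
      rw [hsdef, Finset.sum_filter, Fintype.sum_prod_type]
    rw [e1]
    congr 1
    apply Finset.sum_congr rfl
    intro p hp
    have hPp : 0 < P p := (hmem p).mp hp
    have hQp : 0 < Q p.2 := hQpos p hp
    have hap : a p = Real.log (P p) - Real.log (Q p.2) := by
      rw [hadef]; exact Real.log_div hPp.ne' hQp.ne'
    rw [Real.rpow_def_of_pos hPp, Real.rpow_def_of_pos hQp, ← Real.exp_add, hap]
    rw [show Real.log (P p) * (1 + θ) + Real.log (Q p.2) * -θ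
        = Real.log (P p) + θ * (Real.log (P p) - Real.log (Q p.2)) by ring]
    rw [Real.exp_add, Real.exp_log hPp]
  -- variance in terms of gF
  have hvar : varLogQ P Q = gF'' s P a 0 * gF s P a 0 - gF' s P a 0 ^ 2 := by
    have hg0 : gF s P a 0 = 1 := by
      unfold gF; simpa using hw1
    have hlog : ∀ p ∈ s, Real.log (Q p.2 / P p) = -(a p) := by
      intro p hp
      have hap : a p = Real.log (P p) - Real.log (Q p.2) := by
        rw [hadef]; exact Real.log_div ((hmem p).mp hp).ne' (hQpos p hp).ne'
      rw [hap, Real.log_div (hQpos p hp).ne' ((hmem p).mp hp).ne']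
      ring
    have h1 : (∑ x : 𝒳, ∑ y : 𝒴,
        if 0 < P (x, y) then P (x, y) * (Real.log (Q y / P (x, y))) ^ 2 else 0)
        = gF'' s P a 0 := by
      have e1 : (∑ x : 𝒳, ∑ y : 𝒴,
          if 0 < P (x, y) then P (x, y) * (Real.log (Q y / P (x, y))) ^ 2 else 0)
          = ∑ p ∈ s, P p * (Real.log (Q p.2 / P p)) ^ 2 := by
        rw [hsdef, Finset.sum_filter, Fintype.sum_prod_type]
      rw [e1]
      unfold gF''
      apply Finset.sum_congr rfl
      intro p hp
      rw [hlog p hp]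
      simp
    have h2 : (∑ x : 𝒳, ∑ y : 𝒴,
        if 0 < P (x, y) then P (x, y) * Real.log (Q y / P (x, y)) else 0)
        = -(gF' s P a 0) := by
      have e1 : (∑ x : 𝒳, ∑ y : 𝒴,
          if 0 < P (x, y) then P (x, y) * Real.log (Q y / P (x, y)) else 0)
          = ∑ p ∈ s, P p * Real.log (Q p.2 / P p) := by
        rw [hsdef, Finset.sum_filter, Fintype.sum_prod_type]
      rw [e1]
      unfold gF'
      rw [← Finset.sum_neg_distrib]
      apply Finset.sum_congr rfl
      intro p hp
      rw [hlog p hp]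
      simp
    unfold varLogQ
    rw [h1, h2, hg0]
    ring
  rw [hfun]
  by_cases hconst : ∃ p ∈ s, ∃ q ∈ s, a p ≠ a q
  · -- non-constant case: strictly concave and variance positive
    have hcs := gF_cs_pos s P a hwpos hs hconst
    have hstrict : StrictConcaveOn ℝ (Set.Ioi (-1 : ℝ)) (fun θ => -Real.log (gF s P a θ)) := by
      apply strictConcaveOn_of_deriv2_neg (convex_Ioi _)
        ((continuous_neg_log_gF s P a hwpos hs).continuousOn)
      intro x _
      rw [deriv2_neg_log_gF s P a hwpos hs x]
      have h := hcs x
      have hg := gF_pos s P a hwpos hs x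
      rw [neg_lt, neg_zero]
      apply div_pos _ (pow_pos hg 2)
      nlinarith [h]
    refine ⟨hstrict.concaveOn, iff_of_true hstrict ?_⟩
    rw [hvar]
    exact hcs 0
  · -- constant case: linear, hence concave but not strictly, and variance zero
    push_neg at hconst
    obtain ⟨p₀, hp₀⟩ := hs
    set c : ℝ := a p₀ with hc
    have hac : ∀ p ∈ s, a p = c := fun p hp => hconst p hp p₀ hp₀
    have hgE : ∀ θ : ℝ, gF s P a θ = Real.exp (θ * c) := by
      intro θ
      unfold gF
      rw [show (∑ p ∈ s, P p * Real.exp (θ * a p))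
          = ∑ p ∈ s, P p * Real.exp (θ * c) from
        Finset.sum_congr rfl (fun p hp => by rw [hac p hp])]
      rw [← Finset.sum_mul, hw1, one_mul]
    have hflin : (fun θ => -Real.log (gF s P a θ)) = fun θ => -(c * θ) := by
      funext θ
      rw [hgE θ, Real.log_exp]
      ring
    rw [hflin]
    have hconc : ConcaveOn ℝ (Set.Ioi (-1 : ℝ)) (fun θ => -(c * θ)) := by
      refine ⟨convex_Ioi _, ?_⟩
      intro x _ y _ α β hα hβ hαβ
      apply le_of_eq
      simp only [smul_eq_mul]
      ring
    have hnstrict : ¬ StrictConcaveOn ℝ (Set.Ioi (-1 : ℝ)) (fun θ => -(c * θ)) := by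
      intro h
      have h0 : (0 : ℝ) ∈ Set.Ioi (-1 : ℝ) := by norm_num
      have h1 : (1 : ℝ) ∈ Set.Ioi (-1 : ℝ) := by norm_num
      have := h.2 h0 h1 (by norm_num)
        (by norm_num : (0:ℝ) < 1/2) (by norm_num : (0:ℝ) < 1/2) (by norm_num)
      simp only [smul_eq_mul] at this
      linarith
    have hvar0 : varLogQ P Q = 0 := by
      rw [hvar]
      unfold gF gF' gF''
      simp only [zero_mul, Real.exp_zero, mul_one]
      rw [show (∑ p ∈ s, P p * a p ^ 2) = ∑ p ∈ s, P p * c ^ 2 from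
        Finset.sum_congr rfl (fun p hp => by rw [hac p hp])]
      rw [show (∑ p ∈ s, P p * a p) = ∑ p ∈ s, P p * c from
        Finset.sum_congr rfl (fun p hp => by rw [hac p hp])]
      rw [← Finset.sum_mul, ← Finset.sum_mul, hw1]
      ring
    refine ⟨hconc, iff_of_false hnstrict ?_⟩
    rw [hvar0]
    exact lt_irrefl 0
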